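/- Let F be a field with char(F) ≠ 2. Then the 2×2 Jordan block J_2(−1) (the matrix with both diagonal entries −1, upper-right entry 1, lower-left entry 0), which lies in SL_2(F), is a commutator of unipotent matrices of index 2 if and only if −1 = a² for some a ∈ F. -/

import Mathlib

open Matrix

variable {F : Type*} [Field F]

/-- A unipotent matrix of index 2: `A ≠ I` and `(A - I)² = 0`. -/
def IsU2 {m : Type*} [Fintype m] [DecidableEq m] (A : Matrix m m F) : Prop :=
  A ≠ 1 ∧ (A - 1) ^ 2 = 0

/-- A commutator `X * Y * X⁻¹ * Y⁻¹` of unipotent matrices of index 2. -/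
def IsCommU2 {m : Type*} [Fintype m] [DecidableEq m] (A : Matrix m m F) : Prop :=
  ∃ X Y : Matrix m m F, IsU2 X ∧ IsU2 Y ∧ A = X * Y * X⁻¹ * Y⁻¹

/-- `A` is a product of at most `k` commutators of unipotent matrices of index 2. -/
def IsProdCommU2 {m : Type*} [Fintype m] [DecidableEq m] (k : ℕ) (A : Matrix m m F) : Prop :=
  ∃ L : List (Matrix m m F), L.length ≤ k ∧ (∀ B ∈ L, IsCommU2 B) ∧ L.prod = A

/-- `A` is a product of at most `k` unipotent matrices of index 2. -/
def IsProdU2 {m : Type*} [Fintype m] [DecidableEq m] (k : ℕ) (A : Matrix m m F) : Prop :=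
  ∃ L : List (Matrix m m F), L.length ≤ k ∧ (∀ B ∈ L, IsU2 B) ∧ L.prod = A

lemma trace_sq_aux (P : Matrix (Fin 2) (Fin 2) F) :
    Matrix.trace (P * P) = (Matrix.trace P) ^ 2 - 2 * P.det := by
  simp [Matrix.trace_fin_two, Matrix.det_fin_two, Matrix.mul_apply, Fin.sum_univ_two]
  ring

lemma det_one_add_aux (P : Matrix (Fin 2) (Fin 2) F) :
    (1 + P).det = 1 + Matrix.trace P + P.det := by
  simp [Matrix.det_fin_two, Matrix.trace_fin_two, Matrix.add_apply, Matrix.one_apply]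
  ring

lemma nilp_aux {P : Matrix (Fin 2) (Fin 2) F} (h : P * P = 0) :
    Matrix.trace P = 0 ∧ P.det = 0 := by
  have hd : P.det = 0 := by
    have : P.det * P.det = 0 := by rw [← Matrix.det_mul, h, Matrix.det_zero]
    rcases mul_eq_zero.mp this with h' | h' <;> exact h'
  have ht : Matrix.trace P = 0 := by
    have h2 := trace_sq_aux P
    rw [h, hd] at h2
    have h0 : Matrix.trace (0 : Matrix (Fin 2) (Fin 2) F) = 0 := Matrix.trace_zero _ _
    rw [h0] at h2
    have hsq : (Matrix.trace P) ^ 2 = 0 := by linear_combination -h2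
    exact pow_eq_zero_iff (n := 2) (by norm_num) |>.mp hsq
  exact ⟨ht, hd⟩

set_option maxHeartbeats 1000000 in
theorem stmt7 {F : Type*} [Field F] (hchar : ringChar F ≠ 2) :
    IsCommU2 (!![-1, 1; 0, -1] : Matrix (Fin 2) (Fin 2) F) ↔ ∃ a : F, (-1 : F) = a ^ 2 := by
  have h2 : (2:F) ≠ 0 := Ring.two_ne_zero hchar
  constructor
  · rintro ⟨X, Y, ⟨hX1, hX2⟩, ⟨hY1, hY2⟩, hJ⟩
    have hNX : (X - 1) * (X - 1) = 0 := by rw [← sq]; exact hX2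
    have hNY : (Y - 1) * (Y - 1) = 0 := by rw [← sq]; exact hY2
    obtain ⟨htX, hdX⟩ := nilp_aux hNX
    obtain ⟨htY, hdY⟩ := nilp_aux hNY
    have htrX : Matrix.trace X = 2 := by
      have h' : Matrix.trace (X - 1) = 0 := htX
      rw [Matrix.trace_sub, Matrix.trace_one] at h'
      simp only [Fintype.card_fin, Nat.cast_ofNat] at h'
      linear_combination h'
    have htrY : Matrix.trace Y = 2 := by
      have h' : Matrix.trace (Y - 1) = 0 := htY
      rw [Matrix.trace_sub, Matrix.trace_one] at h'
      simp only [Fintype.card_fin, Nat.cast_ofNat] at h'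
      linear_combination h'
    have hdetX : X.det = 1 := by
      have hx : X = 1 + (X - 1) := by noncomm_ring
      rw [hx, det_one_add_aux, htX, hdX]; ring
    have hdetY : Y.det = 1 := by
      have hy : Y = 1 + (Y - 1) := by noncomm_ring
      rw [hy, det_one_add_aux, htY, hdY]; ring
    have hXX : X * X = 2 * X - 1 := by
      have h' : X * X - (2 * X - 1) = (X - 1) * (X - 1) := by noncomm_ring
      rw [hNX] at h'
      exact sub_eq_zero.mp h'
    have hYY : Y * Y = 2 * Y - 1 := by
      have h' : Y * Y - (2 * Y - 1) = (Y - 1) * (Y - 1) := by noncomm_ring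
      rw [hNY] at h'
      exact sub_eq_zero.mp h'
    have hXinv : X⁻¹ = 2 - X := by
      refine Matrix.inv_eq_right_inv ?_
      have h' : X * (2 - X) = 2 * X - X * X := by noncomm_ring
      rw [h', hXX]; noncomm_ring
    have hYinv : Y⁻¹ = 2 - Y := by
      refine Matrix.inv_eq_right_inv ?_
      have h' : Y * (2 - Y) = 2 * Y - Y * Y := by noncomm_ring
      rw [h', hYY]; noncomm_ring
    rw [hXinv, hYinv] at hJ
    have hkey : X * Y * (2 - X) * (2 - Y)
        = (X + X) - (X * Y * X + X * Y * X) + (X * Y) * (X * Y) := by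
      have e1 : X * Y * (2 - X) * (2 - Y)
          = 4 * (X * Y) - 2 * (X * (Y * Y)) - 2 * (X * Y * X) + (X * Y) * (X * Y) := by
        noncomm_ring
      rw [e1, hYY]; noncomm_ring
    rw [hkey] at hJ
    have htr := congrArg Matrix.trace hJ
    rw [Matrix.trace_add, Matrix.trace_sub, Matrix.trace_add, Matrix.trace_add] at htr
    set t := Matrix.trace (X * Y) with ht
    have e2 : Matrix.trace (X * Y * X) = t + t - 2 := by
      have c1 : Matrix.trace (X * Y * X) = Matrix.trace (X * (X * Y)) :=
        Matrix.trace_mul_comm (X * Y) X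
      have c2 : X * (X * Y) = (X * Y) + (X * Y) - Y := by
        rw [← mul_assoc, hXX]; noncomm_ring
      rw [c1, c2, Matrix.trace_sub, Matrix.trace_add, htrY, ht]
    have e3 : Matrix.trace ((X * Y) * (X * Y)) = t ^ 2 - 2 := by
      rw [trace_sq_aux, Matrix.det_mul, hdetX, hdetY, ht]; ring
    rw [e2, e3, htrX] at htr
    have htrJ : Matrix.trace (!![-1, 1; 0, -1] : Matrix (Fin 2) (Fin 2) F) = -2 := by
      simp [Matrix.trace_fin_two]; norm_num
    rw [htrJ] at htr
    refine ⟨(t - 2) / 2, ?_⟩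
    field_simp
    linear_combination htr
  · rintro ⟨a, ha⟩
    have h4 : (4:F) ≠ 0 := by
      have : (4:F) = 2 * 2 := by norm_num
      rw [this]; exact mul_ne_zero h2 h2
    refine ⟨!![1, 0; -4, 1], !![2 + a, -(a/2); 4, -a], ⟨?_, ?_⟩, ⟨?_, ?_⟩, ?_⟩
    · intro h
      have := congrFun (congrFun h 1) 0
      simp [Matrix.one_apply] at this
      exact h4 this
    · rw [sq]
      ext i j
      fin_cases i <;> fin_cases j <;>
        simp [Matrix.mul_apply, Fin.sum_univ_two, Matrix.sub_apply, Matrix.one_apply]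
    · intro h
      have := congrFun (congrFun h 1) 0
      simp [Matrix.one_apply] at this
      exact h4 this
    · rw [sq]
      ext i j
      fin_cases i <;> fin_cases j <;>
        simp [Matrix.mul_apply, Fin.sum_univ_two, Matrix.sub_apply, Matrix.one_apply] <;>
        (try field_simp) <;> (first
          | linear_combination (0:F) * ha
          | linear_combination (2:F) * ha
          | linear_combination (-2:F) * ha
          | linear_combination (4:F) * ha
          | linear_combination (-4:F) * ha
          | linear_combination (8:F) * ha
          | linear_combination (-8:F) * ha)
    · have hXi : (!![1, 0; -4, 1] : Matrix (Fin 2) (Fin 2) F)⁻¹ = !![1, 0; 4, 1] := by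
        refine Matrix.inv_eq_right_inv ?_
        ext i j
        fin_cases i <;> fin_cases j <;>
          simp [Matrix.mul_apply, Fin.sum_univ_two, Matrix.one_apply]
      have hYi : (!![2 + a, -(a/2); 4, -a] : Matrix (Fin 2) (Fin 2) F)⁻¹
          = !![-a, a/2; -4, 2 + a] := by
        refine Matrix.inv_eq_right_inv ?_
        ext i j
        fin_cases i <;> fin_cases j <;>
          simp [Matrix.mul_apply, Fin.sum_univ_two, Matrix.one_apply] <;>
          (try field_simp) <;> (first
          | linear_combination (0:F) * ha
          | linear_combination (2:F) * ha
          | linear_combination (-2:F) * ha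
          | linear_combination (4:F) * ha
          | linear_combination (-4:F) * ha
          | linear_combination (8:F) * ha
          | linear_combination (-8:F) * ha)
      rw [hXi, hYi]
      ext i j
      fin_cases i <;> fin_cases j <;>
        simp [Matrix.mul_apply, Fin.sum_univ_two] <;>
        (try field_simp) <;> (first
          | linear_combination (0:F) * ha
          | linear_combination (2:F) * ha
          | linear_combination (-2:F) * ha
          | linear_combination (4:F) * ha
          | linear_combination (-4:F) * ha
          | linear_combination (8:F) * ha
          | linear_combination (-8:F) * ha)
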